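/- Diagonal entries and invertibility of the transformation matrix: For all α', α > 0 and u', u ∈ ℝ, every diagonal entry satisfies ℙ_{n,n} = (α'/α)^{n+1} for all n ∈ ℕ; consequently, for every N ∈ ℕ the (N+1)×(N+1) matrix (ℙ_{n,m})_{0 ≤ n, m ≤ N} is invertible. -/

import Mathlib

open MeasureTheory Real Finset

open Polynomial

/-- Physicists' Hermite polynomials: `H 0 x = 1`, `H 1 x = 2x`,
`H (n+1) x = 2x · H n x − 2n · H (n−1) x`. -/
noncomputable def physHermite : ℕ → ℝ → ℝ
  | 0 => fun _ => 1
  | 1 => fun x => 2 * x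
  | (n + 2) => fun x => 2 * x * physHermite (n + 1) x - 2 * ((n : ℝ) + 1) * physHermite n x

open Polynomial in
noncomputable def PH : ℕ → Polynomial ℝ
  | 0 => 1
  | 1 => C 2 * X
  | (n + 2) => C 2 * X * PH (n + 1) - C (2 * ((n : ℝ) + 1)) * PH n

open Polynomial in
lemma PH_eval : ∀ (n : ℕ) (x : ℝ), (PH n).eval x = physHermite n x
  | 0, x => by simp [PH, physHermite]
  | 1, x => by simp [PH, physHermite]
  | (n + 2), x => by
    simp only [PH, physHermite, eval_sub, eval_mul, eval_C, eval_X,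
      PH_eval (n + 1) x, PH_eval n x]

open Polynomial in
lemma PH_deg : ∀ n : ℕ, (PH n).natDegree = n ∧ (PH n).coeff n = 2 ^ n
  | 0 => by simp [PH]
  | 1 => by
    refine ⟨?_, by simp [PH]⟩
    simpa [PH] using natDegree_C_mul_X (2 : ℝ) (by norm_num)
  | (n + 2) => by
    obtain ⟨hd1, hc1⟩ := PH_deg (n + 1)
    obtain ⟨hd0, hc0⟩ := PH_deg n
    have hne : PH (n + 1) ≠ 0 := fun h => by
      simp [h] at hc1
      exact (pow_ne_zero (n + 1) (two_ne_zero (α := ℝ))) hc1.symm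
    have hCX : (C (2:ℝ) * X) ≠ 0 := fun h => by
      simpa using congrArg (fun p => coeff p 1) h
    have hdm : (C (2:ℝ) * X * PH (n + 1)).natDegree = n + 2 := by
      rw [natDegree_mul hCX hne, natDegree_C_mul_X (2:ℝ) (by norm_num), hd1]
      ring
    have hlt : (C (2 * ((n : ℝ) + 1)) * PH n).natDegree < (C (2:ℝ) * X * PH (n + 1)).natDegree := by
      rw [hdm]
      calc (C (2 * ((n : ℝ) + 1)) * PH n).natDegree ≤ (PH n).natDegree := natDegree_C_mul_le _ _
        _ < n + 2 := by rw [hd0]; omega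
    simp only [PH]
    constructor
    · rw [natDegree_sub_eq_left_of_natDegree_lt hlt, hdm]
    · rw [coeff_sub, mul_assoc, coeff_C_mul, coeff_C_mul, coeff_X_mul, hc1,
        coeff_eq_zero_of_natDegree_lt (by omega : (PH n).natDegree < n + 2)]
      ring
lemma two_mul_hasDerivAt (x : ℝ) : HasDerivAt (fun y : ℝ => 2 * y) 2 x := by
  simpa using (hasDerivAt_id x).const_mul (2 : ℝ)

lemma physHermite_hasDerivAt : ∀ (n : ℕ) (x : ℝ),
    HasDerivAt (physHermite (n + 1)) (2 * ((n : ℝ) + 1) * physHermite n x) x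
  | 0, x => by
    have := two_mul_hasDerivAt x
    simp only [physHermite]
    convert this using 1 <;> ring
  | 1, x => by
    have h : HasDerivAt (physHermite 2)
        (2 * physHermite 1 x + 2 * x * 2 - 0) x := by
      simp only [physHermite]
      exact (((two_mul_hasDerivAt x).mul (two_mul_hasDerivAt x))).sub
        ((hasDerivAt_const x _))
    convert h using 1
    simp only [physHermite]; push_cast; ring
  | (n + 2), x => by
    have h1 := physHermite_hasDerivAt (n + 1) x
    have h2 := physHermite_hasDerivAt n x
    have hfe : physHermite (n + 3) = fun y => 2 * y * physHermite (n + 2) y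
        - 2 * ((n : ℝ) + 1 + 1) * physHermite (n + 1) y := by
      funext y
      simp only [physHermite]
      push_cast; ring
    rw [hfe]
    have h := ((two_mul_hasDerivAt x).fun_mul h1).fun_sub
      (h2.const_mul (2 * ((n : ℝ) + 1 + 1)))
    refine h.congr_deriv ?_
    simp only [physHermite]
    push_cast; ring

lemma gauss_hasDerivAt (x : ℝ) : HasDerivAt (fun y : ℝ => Real.exp (-y ^ 2))
    (-(2 * x) * Real.exp (-x ^ 2)) x := by
  have h : HasDerivAt (fun y : ℝ => -y ^ 2) (-(2 * x)) x := by
    simpa using (hasDerivAt_pow 2 x).fun_neg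
  simpa [mul_comm] using h.exp

lemma physHermite_gauss_hasDerivAt (n : ℕ) (x : ℝ) :
    HasDerivAt (fun y : ℝ => physHermite n y * Real.exp (-y ^ 2))
      (-(physHermite (n + 1) x * Real.exp (-x ^ 2))) x := by
  match n with
  | 0 =>
    have := gauss_hasDerivAt x
    simp only [physHermite, one_mul]
    convert this using 1
    ring
  | (m + 1) =>
    have h := (physHermite_hasDerivAt m x).fun_mul (gauss_hasDerivAt x)
    refine h.congr_deriv ?_
    simp only [physHermite]
    push_cast; ring

lemma integrable_pow_gauss (n : ℕ) : Integrable fun x : ℝ => x ^ n * Real.exp (-x ^ 2) := by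
  have h := integrable_rpow_mul_exp_neg_mul_sq (b := 1) one_pos
    (s := (n : ℝ)) (lt_of_lt_of_le neg_one_lt_zero (Nat.cast_nonneg n))
  simpa [Real.rpow_natCast] using h

lemma integrable_poly_gauss (p : Polynomial ℝ) :
    Integrable fun x : ℝ => p.eval x * Real.exp (-x ^ 2) := by
  have : (fun x : ℝ => p.eval x * Real.exp (-x ^ 2)) = fun x : ℝ =>
      ∑ i ∈ Finset.range (p.natDegree + 1), p.coeff i * (x ^ i * Real.exp (-x ^ 2)) := by
    funext x
    rw [eval_eq_sum_range, Finset.sum_mul]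
    congr 1; funext i; ring
  rw [this]
  exact integrable_finset_sum _ fun i _ => (integrable_pow_gauss i).const_mul _

lemma tendsto_pow_gauss_atTop (n : ℕ) :
    Filter.Tendsto (fun x : ℝ => x ^ n * Real.exp (-x ^ 2)) Filter.atTop (nhds 0) := by
  have hb : Filter.Tendsto (fun x : ℝ => Real.exp (-(1/2 : ℝ) * x)) Filter.atTop (nhds 0) := by
    apply Real.tendsto_exp_atBot.comp
    exact Filter.Tendsto.const_mul_atTop_of_neg (by norm_num : -(1/2 : ℝ) < 0) Filter.tendsto_id
  have h := (rpow_mul_exp_neg_mul_sq_isLittleO_exp_neg (b := 1) one_pos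
    ((n : ℝ))).tendsto_zero_of_tendsto hb
  simpa [Real.rpow_natCast] using h

lemma tendsto_poly_gauss_atTop (p : Polynomial ℝ) :
    Filter.Tendsto (fun x : ℝ => p.eval x * Real.exp (-x ^ 2)) Filter.atTop (nhds 0) := by
  have : (fun x : ℝ => p.eval x * Real.exp (-x ^ 2)) = fun x : ℝ =>
      ∑ i ∈ Finset.range (p.natDegree + 1), p.coeff i * (x ^ i * Real.exp (-x ^ 2)) := by
    funext x
    rw [eval_eq_sum_range, Finset.sum_mul]
    congr 1; funext i; ring
  rw [this]
  have := tendsto_finset_sum (Finset.range (p.natDegree + 1))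
    (fun i _ => ((tendsto_pow_gauss_atTop i).const_mul (p.coeff i)))
  simpa using this

lemma tendsto_poly_gauss_atBot (p : Polynomial ℝ) :
    Filter.Tendsto (fun x : ℝ => p.eval x * Real.exp (-x ^ 2)) Filter.atBot (nhds 0) := by
  have h := (tendsto_poly_gauss_atTop (p.comp (-X))).comp Filter.tendsto_neg_atBot_atTop
  have he : ((fun x : ℝ => (p.comp (-X)).eval x * Real.exp (-x ^ 2)) ∘ fun x : ℝ => -x)
      = fun x : ℝ => p.eval x * Real.exp (-x ^ 2) := by
    funext x; simp [Function.comp, eval_comp]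
  rwa [he] at h

lemma integral_deriv_eq_zero (g g' : ℝ → ℝ) (hd : ∀ x, HasDerivAt g (g' x) x)
    (hi : Integrable g') (ht : Filter.Tendsto g Filter.atTop (nhds 0))
    (hb : Filter.Tendsto g Filter.atBot (nhds 0)) : ∫ x, g' x = 0 := by
  have h1 : ∫ x in Set.Ioi (0:ℝ), g' x = 0 - g 0 :=
    integral_Ioi_of_hasDerivAt_of_tendsto (hd 0).continuousAt.continuousWithinAt
      (fun x _ => hd x) hi.integrableOn ht
  have h2 : ∫ x in Set.Iic (0:ℝ), g' x = g 0 - 0 :=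
    integral_Iic_of_hasDerivAt_of_tendsto (hd 0).continuousAt.continuousWithinAt
      (fun x _ => hd x) hi.integrableOn hb
  rw [← setIntegral_univ, ← Set.Iic_union_Ioi (a := (0:ℝ)),
    setIntegral_union (Set.Iic_disjoint_Ioi le_rfl) measurableSet_Ioi
      hi.integrableOn hi.integrableOn, h1, h2]
  ring

lemma ibp (f : Polynomial ℝ) (n : ℕ) :
    ∫ x : ℝ, f.eval x * (physHermite (n + 1) x * Real.exp (-x ^ 2))
      = ∫ x : ℝ, (derivative f).eval x * (physHermite n x * Real.exp (-x ^ 2)) := by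
  have hA : Integrable fun x : ℝ =>
      (derivative f).eval x * (physHermite n x * Real.exp (-x ^ 2)) := by
    simpa [eval_mul, PH_eval, mul_assoc] using integrable_poly_gauss (derivative f * PH n)
  have hB : Integrable fun x : ℝ =>
      f.eval x * (physHermite (n + 1) x * Real.exp (-x ^ 2)) := by
    simpa [eval_mul, PH_eval, mul_assoc] using integrable_poly_gauss (f * PH (n + 1))
  have hd : ∀ x : ℝ, HasDerivAt (fun y => f.eval y * (physHermite n y * Real.exp (-y ^ 2)))
      ((derivative f).eval x * (physHermite n x * Real.exp (-x ^ 2))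
        - f.eval x * (physHermite (n + 1) x * Real.exp (-x ^ 2))) x := by
    intro x
    have h := (f.hasDerivAt x).fun_mul (physHermite_gauss_hasDerivAt n x)
    refine h.congr_deriv ?_; ring
  have hzero : ∫ x : ℝ, ((derivative f).eval x * (physHermite n x * Real.exp (-x ^ 2))
      - f.eval x * (physHermite (n + 1) x * Real.exp (-x ^ 2))) = 0 := by
    apply integral_deriv_eq_zero _ _ hd (hA.sub hB)
    · simpa [eval_mul, PH_eval, mul_assoc] using tendsto_poly_gauss_atTop (f * PH n)
    · simpa [eval_mul, PH_eval, mul_assoc] using tendsto_poly_gauss_atBot (f * PH n)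
  have hsub := integral_sub hA hB
  rw [hzero] at hsub
  linarith

lemma hermite_reduce : ∀ (n : ℕ) (f : Polynomial ℝ),
    ∫ x : ℝ, f.eval x * (physHermite n x * Real.exp (-x ^ 2))
      = ∫ x : ℝ, (derivative^[n] f).eval x * Real.exp (-x ^ 2)
  | 0, f => by simp [physHermite]
  | (n + 1), f => by
    rw [ibp f n, hermite_reduce n (derivative f), Function.iterate_succ_apply]

/-- Asymmetrically weighted Hermite function
`ψ_n^{α,u}(v) = (π·2^n·n!)^{-1/2} · H_n((v−u)/α) · exp(−((v−u)/α)²)`. -/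
noncomputable def awHermite (α u : ℝ) (n : ℕ) (v : ℝ) : ℝ :=
  (Real.sqrt (Real.pi * 2 ^ n * (n.factorial : ℝ)))⁻¹ * physHermite n ((v - u) / α) *
    Real.exp (-((v - u) / α) ^ 2)

/-- The weight `ω(v) = √π · α⁻¹ · exp(((v−u)/α)²)`. -/
noncomputable def hermiteWeight (α u : ℝ) (v : ℝ) : ℝ :=
  Real.sqrt Real.pi * α⁻¹ * Real.exp (((v - u) / α) ^ 2)

/-- Transformation matrix entries `ℙ_{n,m} = ∫ ψ_m^{α',u'}(v) · ψ_n^{α,u}(v) · ω(v) dv`. -/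
noncomputable def transferMatrix (α' u' α u : ℝ) (n m : ℕ) : ℝ :=
  ∫ v : ℝ, awHermite α' u' m v * awHermite α u n v * hermiteWeight α u v

lemma transfer_eq (α' u' α u : ℝ) (hα' : 0 < α') (n m : ℕ) :
    transferMatrix α' u' α u n m =
      (Real.sqrt (Real.pi * 2 ^ m * (m.factorial : ℝ)))⁻¹ *
      (Real.sqrt (Real.pi * 2 ^ n * (n.factorial : ℝ)))⁻¹ * Real.sqrt Real.pi * α⁻¹ * α' *
      ∫ x : ℝ, ((PH n).comp (C (α'/α) * X + C ((u'-u)/α))).eval x *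
        (physHermite m x * Real.exp (-x ^ 2)) := by
  set f : Polynomial ℝ := (PH n).comp (C (α'/α) * X + C ((u'-u)/α)) with hf
  set g : ℝ → ℝ := fun x => f.eval x * (physHermite m x * Real.exp (-x ^ 2)) with hg
  set K : ℝ := (Real.sqrt (Real.pi * 2 ^ m * (m.factorial : ℝ)))⁻¹ *
      (Real.sqrt (Real.pi * 2 ^ n * (n.factorial : ℝ)))⁻¹ * Real.sqrt Real.pi * α⁻¹ with hK
  have hpt : ∀ v : ℝ, awHermite α' u' m v * awHermite α u n v * hermiteWeight α u v
      = K * g (α'⁻¹ * (v - u')) := by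
    intro v
    have he : Real.exp (-((v - u) / α) ^ 2) * Real.exp (((v - u) / α) ^ 2) = 1 := by
      rw [← Real.exp_add, neg_add_cancel, Real.exp_zero]
    have hx'' : α'⁻¹ * (v - u') = (v - u') / α' := (div_eq_inv_mul _ _).symm
    have hfe' : f.eval ((v - u') / α') = physHermite n ((v - u) / α) := by
      rw [hf, eval_comp]
      simp only [eval_add, eval_mul, eval_C, eval_X]
      rw [show α' / α * ((v - u') / α') + (u' - u) / α = (v - u) / α by
        linear_combination ((v - u') / α) * mul_inv_cancel₀ hα'.ne', PH_eval]
    simp only [hg, hx'', hfe', awHermite, hermiteWeight, hK]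
    linear_combination ((Real.sqrt (Real.pi * 2 ^ m * (m.factorial : ℝ)))⁻¹ *
      (Real.sqrt (Real.pi * 2 ^ n * (n.factorial : ℝ)))⁻¹ * Real.sqrt Real.pi * α⁻¹ *
      physHermite m ((v - u') / α') * physHermite n ((v - u) / α) *
      Real.exp (-((v - u') / α') ^ 2)) * he
  rw [transferMatrix]
  simp_rw [hpt]
  rw [integral_const_mul]
  have hshift : ∫ v : ℝ, g (α'⁻¹ * (v - u')) = ∫ v : ℝ, g (α'⁻¹ * v) :=
    integral_sub_right_eq_self (fun v => g (α'⁻¹ * v)) u'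
  rw [hshift, Measure.integral_comp_inv_mul_left g α', abs_of_pos hα']
  simp only [smul_eq_mul]
  ring

lemma comp_deg (n : ℕ) (a b : ℝ) (ha : a ≠ 0) :
    ((PH n).comp (C a * X + C b)).natDegree = n ∧
    ((PH n).comp (C a * X + C b)).coeff n = 2 ^ n * a ^ n := by
  have hlin : (C a * X + C b).natDegree = 1 := natDegree_linear ha
  have hdeg : ((PH n).comp (C a * X + C b)).natDegree = n := by
    rw [natDegree_comp, hlin, (PH_deg n).1, mul_one]
  refine ⟨hdeg, ?_⟩
  have hl := leadingCoeff_comp (p := PH n) (q := C a * X + C b)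
    (by rw [hlin]; exact one_ne_zero)
  rw [leadingCoeff_linear ha] at hl
  have hPl : (PH n).leadingCoeff = 2 ^ n := by
    rw [leadingCoeff, (PH_deg n).1, (PH_deg n).2]
  rw [show ((PH n).comp (C a * X + C b)).coeff n = ((PH n).comp (C a * X + C b)).leadingCoeff by
    rw [leadingCoeff, hdeg], hl, hPl, (PH_deg n).1]

lemma integral_gauss_one : ∫ x : ℝ, Real.exp (-x ^ 2) = Real.sqrt Real.pi := by
  simpa using integral_gaussian 1

lemma transfer_diag (α' u' α u : ℝ) (hα' : 0 < α') (hα : 0 < α) (n : ℕ) :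
    transferMatrix α' u' α u n n = (α' / α) ^ (n + 1) := by
  have ha : α' / α ≠ 0 := div_ne_zero hα'.ne' hα.ne'
  obtain ⟨hdeg, hcoeff⟩ := comp_deg n (α' / α) ((u' - u) / α) ha
  rw [transfer_eq α' u' α u hα' n n, hermite_reduce n _]
  have hiter : derivative^[n] ((PH n).comp (C (α' / α) * X + C ((u' - u) / α)))
      = C ((n.factorial : ℝ) * (2 ^ n * (α' / α) ^ n)) := by
    have h0 : (derivative^[n] ((PH n).comp (C (α' / α) * X + C ((u' - u) / α)))).natDegree ≤ 0 :=
      le_trans (natDegree_iterate_derivative _ n) (by rw [hdeg]; omega)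
    rw [eq_C_of_natDegree_le_zero h0, coeff_iterate_derivative]
    simp only [zero_add, Nat.descFactorial_self, hcoeff, smul_eq_mul, nsmul_eq_mul]
  rw [hiter]
  simp only [eval_C]
  rw [MeasureTheory.integral_const_mul, integral_gauss_one]
  have hX : (0:ℝ) < Real.pi * 2 ^ n * n.factorial := by positivity
  have h1 : (Real.sqrt (Real.pi * 2 ^ n * (n.factorial : ℝ)))⁻¹ *
      (Real.sqrt (Real.pi * 2 ^ n * (n.factorial : ℝ)))⁻¹ *
      (Real.pi * 2 ^ n * (n.factorial : ℝ)) = 1 := by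
    rw [← mul_inv, Real.mul_self_sqrt hX.le]
    exact inv_mul_cancel₀ hX.ne'
  have h2 : Real.sqrt Real.pi * Real.sqrt Real.pi = Real.pi :=
    Real.mul_self_sqrt Real.pi_pos.le
  linear_combination ((Real.sqrt (Real.pi * 2 ^ n * (n.factorial : ℝ)))⁻¹ *
      (Real.sqrt (Real.pi * 2 ^ n * (n.factorial : ℝ)))⁻¹ * α⁻¹ * α' * (n.factorial : ℝ) *
      2 ^ n * (α' / α) ^ n) * h2 + (α⁻¹ * α' * (α' / α) ^ n) * h1

lemma transfer_off (α' u' α u : ℝ) (hα' : 0 < α') (hα : 0 < α) (n m : ℕ) (h : n < m) :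
    transferMatrix α' u' α u n m = 0 := by
  have ha : α' / α ≠ 0 := div_ne_zero hα'.ne' hα.ne'
  obtain ⟨hdeg, -⟩ := comp_deg n (α' / α) ((u' - u) / α) ha
  rw [transfer_eq α' u' α u hα' n m, hermite_reduce m _,
    iterate_derivative_eq_zero (by rw [hdeg]; exact h)]
  simp

/-- Diagonal entries and invertibility of the transformation matrix. -/
theorem transferMatrix_diagonal_and_invertible (α' α u' u : ℝ) (hα' : 0 < α') (hα : 0 < α) :
    (∀ n : ℕ, transferMatrix α' u' α u n n = (α' / α) ^ (n + 1)) ∧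
    ∀ N : ℕ, IsUnit (Matrix.of
      (fun i j : Fin (N + 1) => transferMatrix α' u' α u (i : ℕ) (j : ℕ))) := by
  refine ⟨fun n => transfer_diag α' u' α u hα' hα n, fun N => ?_⟩
  set M : Matrix (Fin (N + 1)) (Fin (N + 1)) ℝ :=
    Matrix.of (fun i j : Fin (N + 1) => transferMatrix α' u' α u (i : ℕ) (j : ℕ)) with hM
  have htri : M.BlockTriangular OrderDual.toDual := by
    intro i j hij
    have hlt : i < j := OrderDual.toDual_lt_toDual.mp hij
    have hij' : (i : ℕ) < (j : ℕ) := hlt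
    exact transfer_off α' u' α u hα' hα (i : ℕ) (j : ℕ) hij'
  rw [Matrix.isUnit_iff_isUnit_det, Matrix.det_of_lowerTriangular M htri, isUnit_iff_ne_zero]
  refine Finset.prod_ne_zero_iff.2 fun i _ => ?_
  have : M i i = (α' / α) ^ ((i : ℕ) + 1) := transfer_diag α' u' α u hα' hα (i : ℕ)
  rw [this]
  exact pow_ne_zero _ (div_ne_zero hα'.ne' hα.ne')
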